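/- Let G be a graph on [n], 2 ≤ k ≤ ⌊n/2⌋, and let φ ∈ ℝ^{C(n,k)} satisfy B_{n,k,k−1}ᵀ φ = 0. Then for every u ∈ [n], the vector φ_u ∈ ℝ^{C(n,k−1)} defined by φ_u(τ) = φ(τ ∪ {u}) if u ∉ τ and 0 otherwise, satisfies B_{n,k−1,k−2}ᵀ φ_u = 0. -/

import Mathlib

open Finset Matrix

/-- The inclusion matrix `B_{n,k,l}` of `l`-subsets into `k`-subsets of `[n]`. -/
def inclMatrix (n k l : ℕ) :
    Matrix {s : Finset (Fin n) // s.card = k} {s : Finset (Fin n) // s.card = l} ℝ :=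
  fun σ η => if η.1 ⊆ σ.1 then 1 else 0

/-- For `φ` on `k`-subsets of `[n]` and `u ∈ [n]`, the vector `φ_u` on `(k-1)`-subsets:
`φ_u(τ) = φ(τ ∪ {u})` if `u ∉ τ`, and `0` if `u ∈ τ`. -/
def phiU (n k : ℕ) (hk : 1 ≤ k) (φ : {s : Finset (Fin n) // s.card = k} → ℝ) (u : Fin n)
    (τ : {s : Finset (Fin n) // s.card = k - 1}) : ℝ :=
  if h : u ∈ τ.1 then 0
  else φ ⟨insert u τ.1, by rw [Finset.card_insert_of_notMem h, τ.2]; omega⟩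

/-- If `B_{n,k,k-1}ᵀ φ = 0`, then `B_{n,k-1,k-2}ᵀ φ_u = 0` for every `u ∈ [n]`. -/
theorem phiU_in_ker (n k : ℕ) (hk : 2 ≤ k) (hkn : k ≤ n / 2)
    (φ : {s : Finset (Fin n) // s.card = k} → ℝ)
    (hφ : (inclMatrix n k (k - 1))ᵀ *ᵥ φ = 0) (u : Fin n) :
    (inclMatrix n (k - 1) (k - 2))ᵀ *ᵥ phiU n k (by omega) φ u = 0 := by
  classical
  funext ρ
  simp only [mulVec, dotProduct, transpose_apply, inclMatrix, Pi.zero_apply,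
    ite_mul, one_mul, zero_mul]
  by_cases hu : u ∈ ρ.1
  · apply Finset.sum_eq_zero
    intro τ _
    split_ifs with h
    · have : u ∈ τ.1 := h hu
      simp [phiU, this]
    · rfl
  · have hη : (insert u ρ.1).card = k - 1 := by
      rw [Finset.card_insert_of_notMem hu, ρ.2]; omega
    have h0 := congrFun hφ ⟨insert u ρ.1, hη⟩
    simp only [mulVec, dotProduct, transpose_apply, inclMatrix, Pi.zero_apply,
      ite_mul, one_mul, zero_mul] at h0
    have hstep : ∀ τ : {s : Finset (Fin n) // s.card = k - 1},
        (if ρ.1 ⊆ τ.1 then phiU n k (by omega) φ u τ else 0)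
          = (if ρ.1 ⊆ τ.1 ∧ u ∉ τ.1 then phiU n k (by omega) φ u τ else 0) := by
      intro τ
      by_cases h1 : ρ.1 ⊆ τ.1
      · by_cases h2 : u ∈ τ.1
        · simp [h1, h2, phiU]
        · simp [h1, h2]
      · simp [h1]
    rw [Finset.sum_congr rfl (fun τ _ => hstep τ), ← Finset.sum_filter, ← h0,
      ← Finset.sum_filter]
    refine Finset.sum_bij'
      (fun τ hτ => (⟨insert u τ.1, by
        have h2 : u ∉ τ.1 := (Finset.mem_filter.mp hτ).2.2
        rw [Finset.card_insert_of_notMem h2, τ.2]; omega⟩ :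
        {s : Finset (Fin n) // s.card = k}))
      (fun σ hσ => (⟨σ.1.erase u, by
        have hsub : insert u ρ.1 ⊆ σ.1 := (Finset.mem_filter.mp hσ).2
        have huσ : u ∈ σ.1 := hsub (Finset.mem_insert_self u ρ.1)
        rw [Finset.card_erase_of_mem huσ, σ.2]⟩ :
        {s : Finset (Fin n) // s.card = k - 1}))
      ?_ ?_ ?_ ?_ ?_
    · intro τ hτ
      obtain ⟨-, h1, h2⟩ := Finset.mem_filter.mp hτ
      refine Finset.mem_filter.mpr ⟨Finset.mem_univ _, ?_⟩
      exact Finset.insert_subset_insert u h1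
    · intro σ hσ
      have hsub : insert u ρ.1 ⊆ σ.1 := (Finset.mem_filter.mp hσ).2
      refine Finset.mem_filter.mpr ⟨Finset.mem_univ _, ?_, ?_⟩
      · intro x hx
        exact Finset.mem_erase.mpr ⟨fun hxu => hu (hxu ▸ hx),
          hsub (Finset.mem_insert_of_mem hx)⟩
      · simp
    · intro τ hτ
      have h2 : u ∉ τ.1 := (Finset.mem_filter.mp hτ).2.2
      exact Subtype.ext (by simp [Finset.erase_insert h2])
    · intro σ hσ
      have hsub : insert u ρ.1 ⊆ σ.1 := (Finset.mem_filter.mp hσ).2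
      have huσ : u ∈ σ.1 := hsub (Finset.mem_insert_self u ρ.1)
      exact Subtype.ext (by simp [Finset.insert_erase huσ])
    · intro τ hτ
      have h2 : u ∉ τ.1 := (Finset.mem_filter.mp hτ).2.2
      simp [phiU, h2]
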